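/- arXiv:math/0610721 — 6 statements merged into one kernel-verified Lean document; each statement's English description precedes it below -/
import Mathlib

section
/- If B₁ and B₂ are symmetric real n×n matrices, then ‖[B₁,B₂]‖² ≤ 2‖B₁‖²‖B₂‖², where [B₁,B₂] = B₁B₂ - B₂B₁ and ‖A‖² = tr(AᵀA). -/
open Matrix

/-- Squared Frobenius norm ‖A‖² = tr(AᵀA). -/
noncomputable def frobSq {n : ℕ} (A : Matrix (Fin n) (Fin n) ℝ) : ℝ :=
  (Aᵀ * A).trace

/-- Commutator [A,B] = AB - BA. -/
def mcomm {n : ℕ} (A B : Matrix (Fin n) (Fin n) ℝ) : Matrix (Fin n) (Fin n) ℝ :=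
  A * B - B * A

lemma frobSq_eq_sum {n : ℕ} (A : Matrix (Fin n) (Fin n) ℝ) :
    frobSq A = ∑ i, ∑ j, A i j ^ 2 := by
  rw [frobSq, Matrix.trace]
  simp only [Matrix.diag_apply, Matrix.mul_apply, Matrix.transpose_apply, sq]
  exact Finset.sum_comm

lemma frobSq_conj {n : ℕ} (U M : Matrix (Fin n) (Fin n) ℝ)
    (h1 : Uᵀ * U = 1) : frobSq (U * M * Uᵀ) = frobSq M := by
  unfold frobSq
  rw [Matrix.transpose_mul, Matrix.transpose_mul, Matrix.transpose_transpose]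
  rw [Matrix.trace_mul_comm]
  simp only [Matrix.mul_assoc]
  rw [← Matrix.mul_assoc Uᵀ U, h1, Matrix.one_mul,
      Matrix.trace_mul_comm]
  simp only [Matrix.mul_assoc]
  rw [h1, Matrix.mul_one, Matrix.trace_mul_comm]

lemma frobSq_diagonal {n : ℕ} (d : Fin n → ℝ) :
    frobSq (Matrix.diagonal d) = ∑ k, d k ^ 2 := by
  rw [frobSq_eq_sum]
  simp [Matrix.diagonal_apply, apply_ite (· ^ 2 : ℝ → ℝ)]

lemma diag_case {n : ℕ} (d : Fin n → ℝ) (B : Matrix (Fin n) (Fin n) ℝ) :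
    frobSq (mcomm (Matrix.diagonal d) B) ≤ 2 * (∑ k, d k ^ 2) * frobSq B := by
  rw [frobSq_eq_sum, frobSq_eq_sum]
  rw [Finset.mul_sum]
  refine Finset.sum_le_sum fun i _ => ?_
  rw [Finset.mul_sum]
  refine Finset.sum_le_sum fun j _ => ?_
  have hentry : mcomm (Matrix.diagonal d) B i j = (d i - d j) * B i j := by
    simp [mcomm, Matrix.sub_apply, Matrix.diagonal_mul, Matrix.mul_diagonal]
    ring
  rw [hentry]
  rcases eq_or_ne i j with h | h
  · subst h
    simp
    positivity
  · have hsub : ({i, j} : Finset (Fin n)) ⊆ Finset.univ := Finset.subset_univ _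
    have hle : d i ^ 2 + d j ^ 2 ≤ ∑ k, d k ^ 2 := by
      have := Finset.sum_le_sum_of_subset_of_nonneg hsub
        (fun k _ _ => sq_nonneg (d k))
      rwa [Finset.sum_pair h] at this
    nlinarith [sq_nonneg (B i j), sq_nonneg (d i + d j), sq_nonneg (d i - d j),
      mul_nonneg (sq_nonneg (d i + d j)) (sq_nonneg (B i j))]

/-- Chern–do Carmo–Kobayashi inequality. -/
theorem cdck_inequality {n : ℕ} (B₁ B₂ : Matrix (Fin n) (Fin n) ℝ)
    (h₁ : B₁.IsSymm) (h₂ : B₂.IsSymm) :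
    frobSq (mcomm B₁ B₂) ≤ 2 * frobSq B₁ * frobSq B₂ := by
  have hH : B₁.IsHermitian := by
    rw [Matrix.IsHermitian]
    ext i j
    simpa [Matrix.conjTranspose_apply] using congrFun (congrFun h₁ i) j
  set U : Matrix (Fin n) (Fin n) ℝ := (hH.eigenvectorUnitary : Matrix (Fin n) (Fin n) ℝ) with hUdef
  have hstar : star U = Uᵀ := by
    ext i j
    simp [Matrix.star_apply]
  have hmem : U ∈ Matrix.unitaryGroup (Fin n) ℝ := (hH.eigenvectorUnitary).2
  have h2 : U * Uᵀ = 1 := by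
    rw [← hstar]; exact (Matrix.mem_unitaryGroup_iff).mp hmem
  have h1 : Uᵀ * U = 1 := by
    rw [← hstar]; exact (Matrix.mem_unitaryGroup_iff').mp hmem
  set d : Fin n → ℝ := hH.eigenvalues with hddef
  set D : Matrix (Fin n) (Fin n) ℝ := Matrix.diagonal d with hDdef
  have hspec : B₁ = U * D * Uᵀ := by
    have := hH.spectral_theorem
    rw [Unitary.conjStarAlgAut_apply] at this
    rw [← hstar]
    exact this
  set B' : Matrix (Fin n) (Fin n) ℝ := Uᵀ * B₂ * U with hB'def
  have hB2 : U * B' * Uᵀ = B₂ := by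
    rw [hB'def]
    simp only [Matrix.mul_assoc]
    rw [h2, Matrix.mul_one, ← Matrix.mul_assoc, h2, Matrix.one_mul]
  have hsand : ∀ X Y : Matrix (Fin n) (Fin n) ℝ,
      (U * X * Uᵀ) * (U * Y * Uᵀ) = U * (X * Y) * Uᵀ := by
    intro X Y
    simp only [Matrix.mul_assoc]
    rw [← Matrix.mul_assoc Uᵀ U (Y * Uᵀ), h1, Matrix.one_mul]
  have hc : mcomm B₁ B₂ = U * mcomm D B' * Uᵀ := by
    rw [mcomm, mcomm, Matrix.mul_sub, Matrix.sub_mul, ← hsand D B', ← hsand B' D,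
      ← hspec, hB2]
  calc frobSq (mcomm B₁ B₂) = frobSq (mcomm D B') := by rw [hc, frobSq_conj _ _ h1]
    _ ≤ 2 * (∑ k, d k ^ 2) * frobSq B' := diag_case d B'
    _ = 2 * frobSq B₁ * frobSq B₂ := by
        rw [hspec, frobSq_conj _ _ h1, ← hB2, frobSq_conj _ _ h1, hDdef, frobSq_diagonal]
end

section
/- Let n ≥ 2 and let λ, μ be real numbers. Then 2(n-1)μ²((n-2)μ² + 2(λ-μ)²) ≤ (n-1)²((1/n)(λ-μ)² + 2μ²)². -/
theorem h_umbilical_ineq (n : ℕ) (hn : 2 ≤ n) (lam mu : ℝ) :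
    2 * ((n : ℝ) - 1) * mu ^ 2 * (((n : ℝ) - 2) * mu ^ 2 + 2 * (lam - mu) ^ 2) ≤
      ((n : ℝ) - 1) ^ 2 * ((1 / (n : ℝ)) * (lam - mu) ^ 2 + 2 * mu ^ 2) ^ 2 := by
  have hN : (2:ℝ) ≤ (n:ℝ) := by exact_mod_cast hn
  have hN0 : (0:ℝ) < (n:ℝ) := by linarith
  set t := (lam - mu) ^ 2 with ht
  set s := mu ^ 2 with hs
  have hts : 0 ≤ t := sq_nonneg _
  have hss : 0 ≤ s := sq_nonneg _
  rw [div_mul_eq_mul_div, one_mul, ← sub_nonneg]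
  have hm1 : (0:ℝ) < (n:ℝ) - 1 := by linarith
  have inner : 0 ≤ ((n:ℝ) - 1) * t ^ 2 - 4 * (n:ℝ) * s * t + 2 * (n:ℝ)^3 * s^2 := by
    have h1 : 0 ≤ (((n:ℝ) - 1) * t - 2 * (n:ℝ) * s)^2 := sq_nonneg _
    have h2 : 0 ≤ s^2 * ((n:ℝ)^2 * ((n:ℝ) * ((n:ℝ)-1) - 2)) := by
      have : (0:ℝ) ≤ (n:ℝ) * ((n:ℝ)-1) - 2 := by nlinarith
      positivity
    nlinarith [mul_pos hm1 hm1]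
  have key : 0 ≤ ((n:ℝ) - 1) * (((n:ℝ) - 1) * t ^ 2 - 4 * (n:ℝ) * s * t + 2 * (n:ℝ)^3 * s^2) :=
    mul_nonneg hm1.le inner
  have expand : ((n : ℝ) - 1) ^ 2 * (t / (n:ℝ) + 2 * s) ^ 2 -
      2 * ((n : ℝ) - 1) * s * (((n : ℝ) - 2) * s + 2 * t) =
      ((n:ℝ) - 1) * (((n:ℝ) - 1) * t ^ 2 - 4 * (n:ℝ) * s * t + 2 * (n:ℝ)^3 * s^2) / (n:ℝ)^2 := by
    field_simp
    ring
  rw [expand]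
  positivity
end

section
/- Let a, b, c, d be real numbers, set P = 2(a²+b²+c²+d²) + ab and Q² = 4(a⁴+b⁴+c⁴+d⁴) + 4a³b + 4ab³ + 3a²b² + 2a²c² + 2a²d² + 2b²c² + 2b²d² + 8c²d² - 8abc² - 8abd². Then Q² ≤ P². -/
theorem minimal_lagrangian_C3_ineq (a b c d : ℝ) :
    4 * (a ^ 4 + b ^ 4 + c ^ 4 + d ^ 4) + 4 * a ^ 3 * b + 4 * a * b ^ 3 + 3 * a ^ 2 * b ^ 2 +
        2 * a ^ 2 * c ^ 2 + 2 * a ^ 2 * d ^ 2 + 2 * b ^ 2 * c ^ 2 + 2 * b ^ 2 * d ^ 2 +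
        8 * c ^ 2 * d ^ 2 - 8 * a * b * c ^ 2 - 8 * a * b * d ^ 2 ≤
      (2 * (a ^ 2 + b ^ 2 + c ^ 2 + d ^ 2) + a * b) ^ 2 := by
  nlinarith [sq_nonneg (a+b), sq_nonneg (a-b), sq_nonneg (c+d), sq_nonneg (c-d), sq_nonneg (a*b), sq_nonneg ((a+b)^2-2*c^2), sq_nonneg ((a+b)^2-2*d^2), sq_nonneg (a^2-b^2), sq_nonneg (c^2-d^2), sq_nonneg ((a-b)*(c+d)), sq_nonneg ((a-b)*(c-d)), mul_self_nonneg (a*b+c^2+d^2)]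
end

section
/- Let B₁, B₂ be real symmetric n×n matrices (n ≥ 2) with B₁ having (1,2) and (2,1) entries μ₁ and all other entries 0, and B₂ diagonal with entries (μ₂, -μ₂, 0, …, 0). Then ‖[B₁,B₂]‖² = 2‖B₁‖²‖B₂‖², i.e., equality holds in the Chern–do Carmo–Kobayashi inequality. -/
open Matrix

lemma sum_two {n : ℕ} (f : Fin (n + 2) → ℝ)
    (h : ∀ i, i ≠ 0 → i ≠ 1 → f i = 0) : ∑ i, f i = f 0 + f 1 := by
  have h01 : (0 : Fin (n + 2)) ≠ 1 := by simp [Fin.ext_iff]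
  rw [← Finset.sum_subset (Finset.subset_univ ({0, 1} : Finset (Fin (n + 2))))]
  · rw [Finset.sum_pair h01]
  · intro i _ hi
    simp only [Finset.mem_insert, Finset.mem_singleton, not_or] at hi
    exact h i hi.1 hi.2

lemma frobSq_eq {n : ℕ} (M : Matrix (Fin n) (Fin n) ℝ) :
    frobSq M = ∑ i, ∑ j, M j i * M j i := by
  simp [frobSq, Matrix.trace, Matrix.mul_apply, Matrix.transpose_apply, Matrix.diag]

/-- Equality case of the Chern–do Carmo–Kobayashi inequality. -/
theorem cdck_equality_case (n : ℕ) (μ₁ μ₂ : ℝ) :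
    let B₁ : Matrix (Fin (n + 2)) (Fin (n + 2)) ℝ :=
      fun i j => if (i = 0 ∧ j = 1) ∨ (i = 1 ∧ j = 0) then μ₁ else 0
    let B₂ : Matrix (Fin (n + 2)) (Fin (n + 2)) ℝ :=
      Matrix.diagonal (fun i => if i = 0 then μ₂ else if i = 1 then -μ₂ else 0)
    frobSq (mcomm B₁ B₂) = 2 * frobSq B₁ * frobSq B₂ := by
  intro B₁ B₂
  have h01 : (0 : Fin (n + 2)) ≠ 1 := by simp [Fin.ext_iff]
  set d : Fin (n + 2) → ℝ := fun i => if i = 0 then μ₂ else if i = 1 then -μ₂ else 0 with hd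
  have hC : ∀ i j, (mcomm B₁ B₂) i j = B₁ i j * (d j - d i) := by
    intro i j
    simp only [mcomm, B₂, Matrix.sub_apply, Matrix.mul_diagonal, Matrix.diagonal_mul, hd]
    split_ifs <;> ring
  have hB1 : ∀ i j : Fin (n + 2), i ≠ 0 → i ≠ 1 → B₁ i j = 0 := by
    intro i j hi0 hi1
    simp [B₁, hi0, hi1]
  have hB1' : ∀ i j : Fin (n + 2), j ≠ 0 → j ≠ 1 → B₁ i j = 0 := by
    intro i j hj0 hj1
    simp [B₁, hj0, hj1]
  have e1 : frobSq B₁ = 2 * μ₁ ^ 2 := by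
    rw [frobSq_eq, sum_two _ (fun i hi0 hi1 => by
      apply Finset.sum_eq_zero; intro j _; rw [hB1' j i hi0 hi1]; ring)]
    rw [sum_two _ (fun j hj0 hj1 => by rw [hB1 j 0 hj0 hj1]; ring),
        sum_two _ (fun j hj0 hj1 => by rw [hB1 j 1 hj0 hj1]; ring)]
    simp [B₁, h01, h01.symm]
    ring
  have e2 : frobSq B₂ = 2 * μ₂ ^ 2 := by
    rw [frobSq_eq, sum_two _ (fun i hi0 hi1 => by
      apply Finset.sum_eq_zero; intro j _
      have : B₂ j i = 0 := by
        rcases eq_or_ne j i with rfl | hji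
        · simp [B₂, Matrix.diagonal_apply_eq, hd, hi0, hi1]
        · simp [B₂, Matrix.diagonal_apply_ne _ hji]
      rw [this]; ring)]
    rw [sum_two _ (fun j hj0 hj1 => by
        rw [show B₂ j 0 = 0 from by simp [B₂, Matrix.diagonal_apply_ne _ hj0]]; ring),
      sum_two _ (fun j hj0 hj1 => by
        rw [show B₂ j 1 = 0 from by simp [B₂, Matrix.diagonal_apply_ne _ hj1]]; ring)]
    simp [B₂, Matrix.diagonal_apply_eq, Matrix.diagonal_apply_ne, h01, h01.symm, hd]
    ring
  have e3 : frobSq (mcomm B₁ B₂) = 8 * μ₁ ^ 2 * μ₂ ^ 2 := by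
    rw [frobSq_eq, sum_two _ (fun i hi0 hi1 => by
      apply Finset.sum_eq_zero; intro j _; rw [hC, hB1' j i hi0 hi1]; ring)]
    rw [sum_two _ (fun j hj0 hj1 => by rw [hC, hB1 j 0 hj0 hj1]; ring),
        sum_two _ (fun j hj0 hj1 => by rw [hC, hB1 j 1 hj0 hj1]; ring)]
    simp only [hC]
    simp [B₁, hd, h01, h01.symm]
    ring
  rw [e1, e2, e3]; ring
end

section
/- Let h : ℝⁿ × ℝⁿ → ℝᵐ be a symmetric bilinear map, H = (1/n)Σᵢ h(eᵢ,eᵢ), c ∈ ℝ, and define ρ = c + (2/(n(n-1))) Σ_{i<j} (⟨h(eᵢ,eᵢ),h(eⱼ,eⱼ)⟩ - ‖h(eᵢ,eⱼ)‖²). Then ‖H‖² - ρ + c = (1/(n(n-1))) Σ_{i,j} ‖h(eᵢ,eⱼ) - δᵢⱼ H‖² ≥ 0; in particular ρ ≤ ‖H‖² + c. -/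
open Finset

def sqNorm {m : ℕ} (v : Fin m → ℝ) : ℝ := ∑ k, (v k) ^ 2

def eInner {m : ℕ} (v w : Fin m → ℝ) : ℝ := ∑ k, v k * w k

lemma sqNorm_nonneg' {m : ℕ} (v : Fin m → ℝ) : 0 ≤ sqNorm v :=
  Finset.sum_nonneg fun _ _ => sq_nonneg _

lemma sqNorm_sub' {m : ℕ} (v w : Fin m → ℝ) :
    sqNorm (v - w) = sqNorm v - 2 * eInner v w + sqNorm w := by
  simp only [sqNorm, eInner, Pi.sub_apply, Finset.mul_sum]
  rw [← Finset.sum_sub_distrib, ← Finset.sum_add_distrib]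
  exact Finset.sum_congr rfl fun k _ => by ring

lemma sum_split' {n : ℕ} (g : Fin n → Fin n → ℝ) (hg : ∀ i j, g i j = g j i) :
    ∑ i, ∑ j, g i j = 2 * (∑ i, ∑ j, if i < j then g i j else 0) + ∑ i, g i i := by
  have key : ∀ i j : Fin n, g i j =
      (if i < j then g i j else 0) + (if j < i then g i j else 0) +
        (if i = j then g i j else 0) := by
    intro i j
    rcases lt_trichotomy i j with hij | hij | hij
    · simp [hij, hij.ne, not_lt.mpr hij.le]
    · simp [hij]
    · simp [hij, hij.ne', not_lt.mpr hij.le]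
  rw [show (∑ i, ∑ j, g i j) = ∑ i, ∑ j, ((if i < j then g i j else 0) +
      (if j < i then g i j else 0) + (if i = j then g i j else 0)) from
    Finset.sum_congr rfl fun i _ => Finset.sum_congr rfl fun j _ => key i j]
  simp only [Finset.sum_add_distrib]
  have h2 : (∑ i, ∑ j, if j < i then g i j else 0)
      = ∑ i, ∑ j, if i < j then g i j else 0 := by
    rw [Finset.sum_comm]
    exact Finset.sum_congr rfl fun i _ => Finset.sum_congr rfl fun j _ => by rw [hg]
  have h3 : (∑ i, ∑ j, if i = j then g i j else 0) = ∑ i, g i i := by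
    refine Finset.sum_congr rfl fun i _ => ?_
    simp [Finset.sum_ite_eq]
  rw [h2, h3]; ring

/-- Algebraic content of Chen's inequality ρ ≤ ‖H‖² + c. -/
theorem chen_inequality_algebraic {n m : ℕ} (hn : 2 ≤ n)
    (h : Fin n → Fin n → (Fin m → ℝ)) (hsymm : ∀ i j, h i j = h j i) (c : ℝ) :
    let H : Fin m → ℝ := (1 / (n : ℝ)) • ∑ i, h i i
    let ρ : ℝ := c + (2 / ((n : ℝ) * ((n : ℝ) - 1))) *
      ∑ i, ∑ j, if i < j then eInner (h i i) (h j j) - sqNorm (h i j) else 0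
    sqNorm H - ρ + c =
        (1 / ((n : ℝ) * ((n : ℝ) - 1))) *
          ∑ i, ∑ j, sqNorm (h i j - (if i = j then (1 : ℝ) else 0) • H) ∧
      ρ ≤ sqNorm H + c := by
  intro H ρ
  have hn2 : (2 : ℝ) ≤ (n : ℝ) := by exact_mod_cast hn
  have hn0 : (n : ℝ) ≠ 0 := by linarith
  have hn1 : (n : ℝ) - 1 ≠ 0 := by linarith
  set D : Fin m → ℝ := ∑ i, h i i with hD
  have hHk : ∀ k, H k = (1 / (n : ℝ)) * D k := by
    intro k; simp [H, hD]
  set A : ℝ := sqNorm D with hA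
  set T : ℝ := ∑ i, ∑ j, sqNorm (h i j) with hT
  -- (1) double inner product sum
  have hDk : ∀ k, D k = ∑ i, h i i k := by intro k; simp [hD]
  have hII : (∑ i, ∑ j, eInner (h i i) (h j j)) = A := by
    have e1 : ∀ k, (D k) ^ 2 = ∑ i, ∑ j, h i i k * h j j k := by
      intro k
      rw [sq, hDk, Finset.sum_mul]
      exact Finset.sum_congr rfl fun i _ => by rw [Finset.mul_sum]
    simp only [eInner]
    rw [hA, sqNorm]
    calc (∑ i : Fin n, ∑ j : Fin n, ∑ k : Fin m, h i i k * h j j k)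
        = ∑ i : Fin n, ∑ k : Fin m, ∑ j : Fin n, h i i k * h j j k :=
          Finset.sum_congr rfl fun i _ => Finset.sum_comm
      _ = ∑ k : Fin m, ∑ i : Fin n, ∑ j : Fin n, h i i k * h j j k := Finset.sum_comm
      _ = ∑ k : Fin m, (D k) ^ 2 := Finset.sum_congr rfl fun k _ => (e1 k).symm
  -- (2) sum of inner with D
  have hED : (∑ i, eInner (h i i) D) = A := by
    simp only [eInner]
    rw [Finset.sum_comm]
    rw [hA, sqNorm]
    refine Finset.sum_congr rfl fun k _ => ?_
    rw [← Finset.sum_mul, ← hDk, sq]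
  -- (3) sqNorm H
  have hHsq : sqNorm H = (1 / (n : ℝ)) ^ 2 * A := by
    rw [hA, sqNorm, sqNorm, Finset.mul_sum]
    refine Finset.sum_congr rfl fun k _ => ?_
    rw [hHk]; ring
  -- (4) eInner with H
  have hEH : ∀ v : Fin m → ℝ, eInner v H = (1 / (n : ℝ)) * eInner v D := by
    intro v
    simp only [eInner, Finset.mul_sum]
    refine Finset.sum_congr rfl fun k _ => ?_
    rw [hHk]; ring
  -- (5) off-diagonal sum
  set S : ℝ := ∑ i, ∑ j, if i < j then eInner (h i i) (h j j) - sqNorm (h i j) else 0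
    with hSdef
  have hS : 2 * S = A - T := by
    have hgsymm : ∀ i j, (eInner (h i i) (h j j) - sqNorm (h i j))
        = (eInner (h j j) (h i i) - sqNorm (h j i)) := by
      intro i j
      rw [hsymm i j]
      congr 1
      simp only [eInner]
      exact Finset.sum_congr rfl fun k _ => mul_comm _ _
    have key := sum_split' (fun i j => eInner (h i i) (h j j) - sqNorm (h i j)) hgsymm
    simp only [Finset.sum_sub_distrib] at key
    rw [hII, ← hT, ← hSdef] at key
    have hdiag : (∑ i : Fin n, eInner (h i i) (h i i)) = ∑ i : Fin n, sqNorm (h i i) :=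
      Finset.sum_congr rfl fun i _ => by simp [eInner, sqNorm, sq]
    linarith
  -- (6) the RHS double sum
  set R : ℝ := ∑ i, ∑ j, sqNorm (h i j - (if i = j then (1 : ℝ) else 0) • H) with hRdef
  have step : ∀ i j : Fin n, sqNorm (h i j - (if i = j then (1 : ℝ) else 0) • H)
      = sqNorm (h i j) + (if i = j then (-(2 * eInner (h i i) H) + sqNorm H) else 0) := by
    intro i j
    by_cases hij : i = j
    · subst hij
      rw [if_pos rfl, if_pos rfl, one_smul, sqNorm_sub']
      ring
    · simp [hij]
  have hR : R = T - 2 * ((1 / (n : ℝ)) * A) + (n : ℝ) * sqNorm H := by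
    rw [hRdef]
    simp only [step, Finset.sum_add_distrib]
    rw [← hT]
    have h4 : (∑ i : Fin n, ∑ j : Fin n,
        if i = j then (-(2 * eInner (h i i) H) + sqNorm H) else 0)
        = ∑ i : Fin n, (-(2 * eInner (h i i) H) + sqNorm H) := by
      refine Finset.sum_congr rfl fun i _ => ?_
      simp
    rw [h4]
    rw [Finset.sum_add_distrib, Finset.sum_const, Finset.card_fin, nsmul_eq_mul]
    have h5 : (∑ i : Fin n, -(2 * eInner (h i i) H)) = -(2 * ((1 / (n : ℝ)) * A)) := by
      calc (∑ i : Fin n, -(2 * eInner (h i i) H))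
          = ∑ i : Fin n, (-(2 * (1 / (n : ℝ)))) * eInner (h i i) D := by
            refine Finset.sum_congr rfl fun i _ => ?_
            rw [hEH]; ring
        _ = (-(2 * (1 / (n : ℝ)))) * ∑ i : Fin n, eInner (h i i) D := by
            rw [Finset.mul_sum]
        _ = -(2 * ((1 / (n : ℝ)) * A)) := by rw [hED]; ring
    rw [h5]; ring
  have hSval : S = (A - T) / 2 := by linarith
  constructor
  · show sqNorm H - ρ + c = (1 / ((n : ℝ) * ((n : ℝ) - 1))) * R
    have hρ : ρ = c + (2 / ((n : ℝ) * ((n : ℝ) - 1))) * S := rfl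
    rw [hρ, hR, hHsq, hSval]
    field_simp
    ring
  · have hRnn : 0 ≤ R := by
      rw [hRdef]
      exact Finset.sum_nonneg fun i _ => Finset.sum_nonneg fun j _ => sqNorm_nonneg' _
    have hcoef : 0 ≤ 1 / ((n : ℝ) * ((n : ℝ) - 1)) := by
      have hpos : 0 < (n : ℝ) * ((n : ℝ) - 1) := by nlinarith
      exact div_nonneg zero_le_one hpos.le
    have heq : sqNorm H - ρ + c = (1 / ((n : ℝ) * ((n : ℝ) - 1))) * R := by
      have hρ : ρ = c + (2 / ((n : ℝ) * ((n : ℝ) - 1))) * S := rfl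
      rw [hρ, hR, hHsq, hSval]
      field_simp
      ring
    have h0 : 0 ≤ sqNorm H - ρ + c := heq ▸ mul_nonneg hcoef hRnn
    linarith
end

section
/- Let λ, μ be real numbers, n ≥ 2, and define symmetric n×n matrices B₁,…,B_n as the trace-free parts of the shape operators of an H-umbilical Lagrangian immersion: A₁ = diag-block with A₁e₁ = λe₁, A₁eⱼ = μeⱼ (j ≥ 2); A_j (j ≥ 2) has entries (A_j)_{1j} = (A_j)_{j1} = μ and all others 0; and B_α = A_α - (tr A_α / n) I. Then Σ_{α,β=1}^n ‖[B_α,B_β]‖² = 2(n-1)μ²((n-2)μ² + 2(λ-μ)²) and (Σ_{α=1}^n ‖B_α‖²)² = (n-1)²((1/n)(λ-μ)² + 2μ²)². -/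
open Matrix

namespace HUmb

lemma std_transpose {m : ℕ} (i j : Fin m) (c : ℝ) :
    (single i j c)ᵀ = single j i c := by
  ext a b; simp [single, and_comm]

lemma std_neg {m : ℕ} (i j : Fin m) (c : ℝ) :
    single i j (-c) = -single i j c := by
  ext a b; simp [single]; split_ifs <;> simp

lemma std_sub {m : ℕ} (i j : Fin m) (a b : ℝ) :
    single i j a - single i j b = single i j (a - b) := by
  ext x y; simp [single]; split_ifs <;> simp

lemma diag_mul_std {m : ℕ} (d : Fin m → ℝ) (i j : Fin m) (c : ℝ) :
    Matrix.diagonal d * single i j c = single i j (d i * c) := by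
  ext a b
  rw [diagonal_mul]
  by_cases h : a = i <;> by_cases h2 : b = j <;>
    simp [single, h, h2] <;> simp_all

lemma std_mul_diag {m : ℕ} (d : Fin m → ℝ) (i j : Fin m) (c : ℝ) :
    single i j c * Matrix.diagonal d = single i j (c * d j) := by
  ext a b
  rw [mul_diagonal]
  by_cases h : a = i <;> by_cases h2 : b = j <;>
    simp [single, h, h2] <;> simp_all

lemma frobSq_skew {m : ℕ} (i j : Fin m) (h : i ≠ j) (c : ℝ) :
    frobSq (single i j c - single j i c) = 2 * c ^ 2 := by
  rw [frobSq, transpose_sub, std_transpose, std_transpose, sub_mul, mul_sub, mul_sub]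
  rw [single_mul_single_same, single_mul_single_same,
    single_mul_single_of_ne c j i j h, single_mul_single_of_ne c i j i h.symm]
  simp [trace_sub]
  ring

lemma frobSq_neg {m : ℕ} (M : Matrix (Fin m) (Fin m) ℝ) : frobSq (-M) = frobSq M := by
  rw [frobSq, frobSq, transpose_neg, neg_mul_neg]

lemma frobSq_zero {m : ℕ} : frobSq (0 : Matrix (Fin m) (Fin m) ℝ) = 0 := by
  simp [frobSq]

lemma mcomm_self {m : ℕ} (M : Matrix (Fin m) (Fin m) ℝ) : mcomm M M = 0 := sub_self _

lemma mcomm_swap {m : ℕ} (M N : Matrix (Fin m) (Fin m) ℝ) : mcomm N M = -mcomm M N := by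
  simp [mcomm]

noncomputable def Am (k : ℕ) (lam mu : ℝ) : Fin (k + 2) → Matrix (Fin (k + 2)) (Fin (k + 2)) ℝ :=
  fun α =>
    if α = 0 then Matrix.diagonal (fun i => if i = 0 then lam else mu)
    else fun i j => if (i = 0 ∧ j = α) ∨ (i = α ∧ j = 0) then mu else 0

noncomputable def Bm (k : ℕ) (lam mu : ℝ) : Fin (k + 2) → Matrix (Fin (k + 2)) (Fin (k + 2)) ℝ :=
  fun α => Am k lam mu α - ((Am k lam mu α).trace / ((k + 2 : ℕ) : ℝ)) • (1 : Matrix (Fin (k+2)) (Fin (k+2)) ℝ)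

variable (k : ℕ) (lam mu : ℝ)

noncomputable def tval : ℝ := (lam + ((k : ℝ) + 1) * mu) / ((k + 2 : ℕ) : ℝ)

lemma hA0 : Am k lam mu 0 = Matrix.diagonal (fun i => if i = 0 then lam else mu) := by
  simp [Am]

lemma hAne (α : Fin (k + 2)) (hα : α ≠ 0) :
    Am k lam mu α = single 0 α mu + single α 0 mu := by
  simp only [Am, hα, ↓reduceIte]
  ext i j
  simp only [single, Matrix.add_apply, of_apply]
  split_ifs <;> simp_all <;> simp_all [eq_comm] <;> tauto

lemma htrA0 : (Am k lam mu 0).trace = lam + ((k : ℝ) + 1) * mu := by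
  rw [hA0, trace_diagonal, Fin.sum_univ_succ]
  simp [Fin.succ_ne_zero, Finset.sum_const, nsmul_eq_mul]

lemma htrAne (α : Fin (k + 2)) (hα : α ≠ 0) : (Am k lam mu α).trace = 0 := by
  rw [hAne k lam mu α hα, trace_add,
    trace_single_eq_of_ne 0 α mu (Ne.symm hα), trace_single_eq_of_ne α 0 mu hα]
  ring

lemma hBne (α : Fin (k + 2)) (hα : α ≠ 0) :
    Bm k lam mu α = single 0 α mu + single α 0 mu := by
  rw [Bm, htrAne k lam mu α hα, hAne k lam mu α hα]
  simp

lemma hB0 : Bm k lam mu 0 =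
    Matrix.diagonal (fun i => (if i = 0 then lam else mu) - tval k lam mu) := by
  rw [Bm, htrA0, hA0]
  have h1 : ((lam + ((k : ℝ) + 1) * mu) / ((k + 2 : ℕ) : ℝ)) • (1 : Matrix (Fin (k+2)) (Fin (k+2)) ℝ)
      = Matrix.diagonal (fun _ => tval k lam mu) := by
    ext i j
    by_cases h : i = j <;> simp [Matrix.one_apply, h, tval]
  rw [h1, Matrix.diagonal_sub]

lemma hcomm0 (β : Fin (k + 2)) (hβ : β ≠ 0) :
    mcomm (Bm k lam mu 0) (Bm k lam mu β) =
      single 0 β ((lam - mu) * mu) - single β 0 ((lam - mu) * mu) := by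
  rw [mcomm, hB0, hBne k lam mu β hβ, mul_add, add_mul,
    diag_mul_std, diag_mul_std, std_mul_diag, std_mul_diag]
  have e0 : ((if (0 : Fin (k+2)) = 0 then lam else mu) - tval k lam mu) = lam - tval k lam mu := by simp
  have eβ : ((if β = 0 then lam else mu) - tval k lam mu) = mu - tval k lam mu := by simp [hβ]
  rw [e0, eβ, add_sub_add_comm, std_sub, std_sub]
  rw [show (lam - tval k lam mu) * mu - mu * (mu - tval k lam mu) = (lam - mu) * mu from by ring]
  rw [show (mu - tval k lam mu) * mu - mu * (lam - tval k lam mu) = -((lam - mu) * mu) from by ring]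
  rw [std_neg, ← sub_eq_add_neg]

lemma hcommne (α β : Fin (k + 2)) (hα : α ≠ 0) (hβ : β ≠ 0) (hαβ : α ≠ β) :
    mcomm (Bm k lam mu α) (Bm k lam mu β) =
      single α β (mu * mu) - single β α (mu * mu) := by
  rw [mcomm, hBne k lam mu α hα, hBne k lam mu β hβ]
  simp only [mul_add, add_mul]
  rw [single_mul_single_of_ne mu 0 α 0 hα mu,
    single_mul_single_of_ne mu 0 α β hαβ mu,
    single_mul_single_same mu α 0 β mu,
    single_mul_single_of_ne mu α 0 β (Ne.symm hβ) mu,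
    single_mul_single_of_ne mu 0 β 0 hβ mu,
    single_mul_single_of_ne mu 0 β α (Ne.symm hαβ) mu,
    single_mul_single_same mu β 0 α mu,
    single_mul_single_of_ne mu β 0 α (Ne.symm hα) mu]
  simp

lemma hF0 (β : Fin (k + 2)) (hβ : β ≠ 0) :
    frobSq (mcomm (Bm k lam mu 0) (Bm k lam mu β)) = 2 * ((lam - mu) * mu) ^ 2 := by
  rw [hcomm0 k lam mu β hβ, frobSq_skew 0 β (Ne.symm hβ)]

lemma hFs (β : Fin (k + 2)) (hβ : β ≠ 0) :
    frobSq (mcomm (Bm k lam mu β) (Bm k lam mu 0)) = 2 * ((lam - mu) * mu) ^ 2 := by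
  rw [mcomm_swap, frobSq_neg, hF0 k lam mu β hβ]

lemma hFd (α : Fin (k + 2)) :
    frobSq (mcomm (Bm k lam mu α) (Bm k lam mu α)) = 0 := by
  rw [mcomm_self, frobSq_zero]

lemma hFne (α β : Fin (k + 2)) (hα : α ≠ 0) (hβ : β ≠ 0) (hαβ : α ≠ β) :
    frobSq (mcomm (Bm k lam mu α) (Bm k lam mu β)) = 2 * (mu * mu) ^ 2 := by
  rw [hcommne k lam mu α β hα hβ hαβ, frobSq_skew α β hαβ]

lemma part1 : ∑ α, ∑ β, frobSq (mcomm (Bm k lam mu α) (Bm k lam mu β)) =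
    2 * (((k + 2 : ℕ) : ℝ) - 1) * mu ^ 2 *
      ((((k + 2 : ℕ) : ℝ) - 2) * mu ^ 2 + 2 * (lam - mu) ^ 2) := by
  have inner0 : ∑ β, frobSq (mcomm (Bm k lam mu 0) (Bm k lam mu β)) =
      ((k : ℝ) + 1) * (2 * ((lam - mu) * mu) ^ 2) := by
    rw [Fin.sum_univ_succ, hFd,
      Finset.sum_congr rfl (fun i _ => hF0 k lam mu i.succ (Fin.succ_ne_zero i)),
      Finset.sum_const]
    simp [nsmul_eq_mul]
    try push_cast
    try ring
  have innerj : ∀ j : Fin (k + 1), ∑ β, frobSq (mcomm (Bm k lam mu j.succ) (Bm k lam mu β)) =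
      2 * ((lam - mu) * mu) ^ 2 + (k : ℝ) * (2 * (mu * mu) ^ 2) := by
    intro j
    rw [Fin.sum_univ_succ, hFs k lam mu j.succ (Fin.succ_ne_zero j)]
    have h : ∀ i : Fin (k + 1), frobSq (mcomm (Bm k lam mu j.succ) (Bm k lam mu i.succ)) =
        2 * (mu * mu) ^ 2 - (if i = j then 2 * (mu * mu) ^ 2 else 0) := by
      intro i
      by_cases hij : i = j
      · subst hij
        rw [if_pos rfl, hFd]
        ring
      · rw [if_neg hij, hFne k lam mu j.succ i.succ (Fin.succ_ne_zero j) (Fin.succ_ne_zero i)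
          (fun e => hij (Fin.succ_injective _ e.symm)), sub_zero]
    rw [Finset.sum_congr rfl (fun i _ => h i), Finset.sum_sub_distrib, Finset.sum_const,
      Finset.sum_ite_eq' Finset.univ j (fun _ => 2 * (mu * mu) ^ 2)]
    simp [nsmul_eq_mul]
    push_cast
    ring
  rw [Fin.sum_univ_succ, inner0, Finset.sum_congr rfl (fun j _ => innerj j), Finset.sum_const]
  simp [nsmul_eq_mul]
  push_cast
  ring

lemma hFB0 : frobSq (Bm k lam mu 0) =
    (lam - tval k lam mu) ^ 2 + ((k : ℝ) + 1) * (mu - tval k lam mu) ^ 2 := by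
  rw [hB0, frobSq, diagonal_transpose, diagonal_mul_diagonal, trace_diagonal, Fin.sum_univ_succ]
  simp [Fin.succ_ne_zero, Finset.sum_const, nsmul_eq_mul]
  push_cast
  ring

lemma hFBne (β : Fin (k + 2)) (hβ : β ≠ 0) : frobSq (Bm k lam mu β) = 2 * mu ^ 2 := by
  rw [hBne k lam mu β hβ, frobSq, transpose_add, std_transpose, std_transpose]
  simp only [add_mul, mul_add]
  rw [single_mul_single_same mu β 0 β mu,
    single_mul_single_of_ne mu β 0 β (Ne.symm hβ) mu,
    single_mul_single_of_ne mu 0 β 0 hβ mu,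
    single_mul_single_same mu 0 β 0 mu]
  simp
  ring

lemma part2 : (∑ α, frobSq (Bm k lam mu α)) ^ 2 =
    (((k + 2 : ℕ) : ℝ) - 1) ^ 2 *
      ((1 / ((k + 2 : ℕ) : ℝ)) * (lam - mu) ^ 2 + 2 * mu ^ 2) ^ 2 := by
  have hsum : ∑ α, frobSq (Bm k lam mu α) =
      ((k : ℝ) + 1) * ((1 / ((k : ℝ) + 2)) * (lam - mu) ^ 2 + 2 * mu ^ 2) := by
    rw [Fin.sum_univ_succ, hFB0,
      Finset.sum_congr rfl (fun i _ => hFBne k lam mu i.succ (Fin.succ_ne_zero i)),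
      Finset.sum_const]
    simp only [Finset.card_univ, Fintype.card_fin, nsmul_eq_mul, tval]
    have hk : ((k + 2 : ℕ) : ℝ) = (k : ℝ) + 2 := by push_cast; ring
    rw [hk]
    have hne : (k : ℝ) + 2 ≠ 0 := by positivity
    field_simp
    push_cast
    ring
  rw [hsum]
  push_cast
  ring

end HUmb


/-- Commutator norms for the trace-free shape operators of an H-umbilical
Lagrangian immersion in ℂⁿ (here n = k + 2 ≥ 2). -/
theorem h_umbilical_computation (k : ℕ) (lam mu : ℝ) :
    let n : ℕ := k + 2
    let A : Fin n → Matrix (Fin n) (Fin n) ℝ := fun α =>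
      if α = 0 then Matrix.diagonal (fun i => if i = 0 then lam else mu)
      else fun i j => if (i = 0 ∧ j = α) ∨ (i = α ∧ j = 0) then mu else 0
    let B : Fin n → Matrix (Fin n) (Fin n) ℝ := fun α =>
      A α - ((A α).trace / (n : ℝ)) • (1 : Matrix (Fin n) (Fin n) ℝ)
    (∑ α, ∑ β, frobSq (mcomm (B α) (B β)) =
        2 * ((n : ℝ) - 1) * mu ^ 2 * (((n : ℝ) - 2) * mu ^ 2 + 2 * (lam - mu) ^ 2)) ∧
      ((∑ α, frobSq (B α)) ^ 2 =
        ((n : ℝ) - 1) ^ 2 * ((1 / (n : ℝ)) * (lam - mu) ^ 2 + 2 * mu ^ 2) ^ 2) := by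
  
  intro n A B
  have hBB : B = HUmb.Bm k lam mu := rfl
  rw [hBB]
  exact ⟨HUmb.part1 k lam mu, HUmb.part2 k lam mu⟩
end
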